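/- There exist a constant C₀ > 0 and a linear functional ζ defined on the range W = B(H) ⊆ V such that f(v) − ⟨A u⁰, A v⟩_U = ζ(B v) for every v ∈ H, and |ζ(w)| ≤ C₀ · inf{‖v‖_H : v ∈ H, B v = w} for every w ∈ W. -/

import Mathlib

open RealInnerProductSpace

/-- There exist a constant C₀ > 0 and a linear functional ζ defined on the range
W = B(H) ⊆ V such that f(v) − ⟨A u⁰, A v⟩_U = ζ(B v) for every v ∈ H, and
|ζ(w)| ≤ C₀ · inf{‖v‖_H : v ∈ H, B v = w} for every w ∈ W. -/
theorem stmt_2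
    {H U V : Type*}
    [NormedAddCommGroup H] [InnerProductSpace ℝ H] [CompleteSpace H]
    [NormedAddCommGroup U] [InnerProductSpace ℝ U] [CompleteSpace U]
    [NormedAddCommGroup V] [InnerProductSpace ℝ V] [CompleteSpace V]
    (A : H →L[ℝ] U) (B : H →L[ℝ] V)
    (c₁ c₂ : ℝ) (hc₁ : 0 < c₁) (hc₂ : 0 < c₂)
    (hlow : ∀ v : H, c₁ * ‖v‖ ≤ ‖A v‖ + ‖B v‖)
    (hup : ∀ v : H, ‖A v‖ + ‖B v‖ ≤ c₂ * ‖v‖)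
    (f : H →L[ℝ] ℝ)
    (u₀ : H) (hu₀ : B u₀ = 0)
    (hu₀' : ∀ v : H, B v = 0 → ⟪A u₀, A v⟫ = f v) :
    ∃ C₀ : ℝ, 0 < C₀ ∧
      ∃ ζ : ↥(LinearMap.range (B : H →ₗ[ℝ] V)) →ₗ[ℝ] ℝ,
        (∀ v : H, f v - ⟪A u₀, A v⟫ = ζ ⟨B v, ⟨v, rfl⟩⟩) ∧
        ∀ w : ↥(LinearMap.range (B : H →ₗ[ℝ] V)),
          |ζ w| ≤ C₀ * sInf {r : ℝ | ∃ v : H, B v = (w : V) ∧ ‖v‖ = r} := by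
  set gc : H →L[ℝ] ℝ := f - (innerSL ℝ (A u₀)).comp A with hgc
  set g : H →ₗ[ℝ] ℝ := gc.toLinearMap
  have hg : ∀ v : H, g v = f v - ⟪A u₀, A v⟫ := fun v => rfl
  have hker : LinearMap.ker (B : H →ₗ[ℝ] V) ≤ LinearMap.ker g := by
    intro v hv
    simp only [LinearMap.mem_ker] at hv ⊢
    rw [hg, hu₀' v hv, sub_self]
  set e := (B : H →ₗ[ℝ] V).quotKerEquivRange
  set ζ : ↥(LinearMap.range (B : H →ₗ[ℝ] V)) →ₗ[ℝ] ℝ :=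
    ((LinearMap.ker (B : H →ₗ[ℝ] V)).liftQ g hker).comp e.symm.toLinearMap with hζ
  have key : ∀ (v : H) (hv : B v ∈ LinearMap.range (B : H →ₗ[ℝ] V)),
      ζ ⟨B v, hv⟩ = g v := by
    intro v hv
    have h1 : e.symm ⟨B v, hv⟩ = Submodule.Quotient.mk v := by
      apply e.injective
      rw [e.apply_symm_apply]
      ext
      exact ((B : H →ₗ[ℝ] V).quotKerEquivRange_apply_mk v).symm
    simp [hζ, h1]
  refine ⟨‖f‖ + ‖A u₀‖ * ‖A‖ + 1, by positivity, ζ, ?_, ?_⟩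
  · intro v
    rw [key v ⟨v, rfl⟩, hg]
  · intro w
    obtain ⟨v₀, hv₀⟩ := w.2
    have hbound : ∀ v : H, B v = (w : V) → |ζ w| ≤ (‖f‖ + ‖A u₀‖ * ‖A‖ + 1) * ‖v‖ := by
      intro v hv
      have : ζ w = g v := by
        have : w = ⟨B v, ⟨v, rfl⟩⟩ := by ext; exact hv.symm
        rw [this]; exact key v _
      rw [this, hg]
      have h1 : |f v| ≤ ‖f‖ * ‖v‖ := f.le_opNorm v
      have h2 : |⟪A u₀, A v⟫| ≤ ‖A u₀‖ * (‖A‖ * ‖v‖) := by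
        calc |⟪A u₀, A v⟫| ≤ ‖A u₀‖ * ‖A v‖ := abs_real_inner_le_norm _ _
          _ ≤ ‖A u₀‖ * (‖A‖ * ‖v‖) := by
              exact mul_le_mul_of_nonneg_left (A.le_opNorm v) (norm_nonneg _)
      calc |f v - ⟪A u₀, A v⟫| ≤ |f v| + |⟪A u₀, A v⟫| := abs_sub _ _
        _ ≤ ‖f‖ * ‖v‖ + ‖A u₀‖ * (‖A‖ * ‖v‖) := add_le_add h1 h2
        _ ≤ (‖f‖ + ‖A u₀‖ * ‖A‖ + 1) * ‖v‖ := by nlinarith [norm_nonneg v]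
    have hpos : (0:ℝ) < ‖f‖ + ‖A u₀‖ * ‖A‖ + 1 := by positivity
    have hinf : |ζ w| / (‖f‖ + ‖A u₀‖ * ‖A‖ + 1) ≤
        sInf {r : ℝ | ∃ v : H, B v = (w : V) ∧ ‖v‖ = r} := by
      refine le_csInf ⟨‖v₀‖, v₀, hv₀, rfl⟩ ?_
      rintro r ⟨v, hv, rfl⟩
      rw [div_le_iff₀' hpos]
      exact hbound v hv
    rw [div_le_iff₀' hpos] at hinf
    exact hinf
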